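/- If X is a group with n + 1 elements, regarded as a symmetric set (a reduced symmetric set, X_0 a singleton, for which 𝓔_T is a bijection for every spine T of every [m], with |X_1| = n + 1), then X has dimension n. -/

import Mathlib

/-- A symmetric (simplicial) set: a functor `Υᵒᵖ → Set`, where `Υ` has objects
`[n] = {0,…,n}` (encoded as `Fin (n+1)`) and all functions as morphisms.
For `α : [m] → [n]` and `x ∈ X_n`, `act α x` is `x · α ∈ X_m`. -/
structure SymSet where
  obj : ℕ → Type
  act : ∀ {m n : ℕ}, (Fin (m + 1) → Fin (n + 1)) → obj n → obj m
  act_id : ∀ {n : ℕ} (x : obj n), act id x = x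
  act_comp : ∀ {m n k : ℕ} (α : Fin (m + 1) → Fin (n + 1)) (β : Fin (n + 1) → Fin (k + 1))
      (x : obj k), act α (act β x) = act (β ∘ α) x

namespace SymSet

/-- `x_{ij} ∈ X_1`, the action on `x ∈ X_n` of the map `[1] → [n]` with `0 ↦ i`, `1 ↦ j`. -/
def edge (X : SymSet) {n : ℕ} (i j : Fin (n + 1)) (x : X.obj n) : X.obj 1 :=
  X.act (fun t : Fin 2 => if t = 0 then i else j) x

/-- The domain of an edge, its image under `ι₀ : [0] → [1]`, `0 ↦ 0`. -/
def edgeDom (X : SymSet) (f : X.obj 1) : X.obj 0 :=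
  X.act (fun _ : Fin 1 => (0 : Fin 2)) f

/-- The codomain of an edge, its image under `ι₁ : [0] → [1]`, `0 ↦ 1`. -/
def edgeCod (X : SymSet) (f : X.obj 1) : X.obj 0 :=
  X.act (fun _ : Fin 1 => (1 : Fin 2)) f

/-- The identity edge `id_a` on an object `a ∈ X_0`, induced by the unique map `[1] → [0]`. -/
def identityEdge (X : SymSet) (a : X.obj 0) : X.obj 1 :=
  X.act (fun _ : Fin 2 => (0 : Fin 1)) a

/-- An edge is an identity if it is in the image of `X_0 → X_1`. -/
def IsIdentityEdge (X : SymSet) (f : X.obj 1) : Prop :=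
  ∃ a : X.obj 0, f = X.identityEdge a

/-- The tuple of edges `x_{ij}` (for `i < j` an edge `{i,j}` of the spine `T`)
associated to an `n`-simplex `x`. -/
def spineTuple (X : SymSet) {n : ℕ} (T : SimpleGraph (Fin (n + 1))) (x : X.obj n) :
    ∀ i j : Fin (n + 1), i < j → T.Adj i j → X.obj 1 :=
  fun i j _ _ => X.edge i j x

/-- Membership in `lim_T X`: the components have matching endpoints. -/
def IsSpineLim (X : SymSet) {n : ℕ} (T : SimpleGraph (Fin (n + 1)))
    (e : ∀ i j : Fin (n + 1), i < j → T.Adj i j → X.obj 1) : Prop :=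
  ∃ v : Fin (n + 1) → X.obj 0, ∀ (i j : Fin (n + 1)) (hlt : i < j) (h : T.Adj i j),
    X.edgeDom (e i j hlt h) = v i ∧ X.edgeCod (e i j hlt h) = v j

/-- The limit `lim_T X` of the diagram associated to a spine `T`. -/
def SpineLim (X : SymSet) {n : ℕ} (T : SimpleGraph (Fin (n + 1))) : Type :=
  { e : ∀ i j : Fin (n + 1), i < j → T.Adj i j → X.obj 1 // X.IsSpineLim T e }

lemma spineTuple_isSpineLim (X : SymSet) {n : ℕ} (T : SimpleGraph (Fin (n + 1)))
    (x : X.obj n) : X.IsSpineLim T (X.spineTuple T x) := by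
  refine ⟨fun i => X.act (fun _ : Fin 1 => i) x, fun i j hlt h => ⟨?_, ?_⟩⟩
  · show X.act _ (X.act _ x) = _
    rw [X.act_comp]
    show X.act ((fun t : Fin 2 => if t = 0 then i else j) ∘ fun _ : Fin 1 => 0) x
      = X.act (fun _ : Fin 1 => i) x
    congr 1
  · show X.act _ (X.act _ x) = _
    rw [X.act_comp]
    show X.act ((fun t : Fin 2 => if t = 0 then i else j) ∘ fun _ : Fin 1 => 1) x
      = X.act (fun _ : Fin 1 => j) x
    congr 1

/-- The map `𝓔_T : X_n → lim_T X`. -/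
def spineMap (X : SymSet) {n : ℕ} (T : SimpleGraph (Fin (n + 1))) (x : X.obj n) :
    X.SpineLim T :=
  ⟨X.spineTuple T x, X.spineTuple_isSpineLim T x⟩

/-- A symmetric set is *spiny* if `𝓔_T` is injective for every `n ≥ 1` and
every spine `T` of `[n]` (a tree with vertex set `[n]`). -/
def Spiny (X : SymSet) : Prop :=
  ∀ n : ℕ, 1 ≤ n → ∀ T : SimpleGraph (Fin (n + 1)), T.IsTree →
    Function.Injective (X.spineMap T)

/-- An element `x ∈ X_n` is degenerate if `x = y · σ` for some noninvertible
surjection `σ : [n] → [k]`. -/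
def Degenerate (X : SymSet) {n : ℕ} (x : X.obj n) : Prop :=
  ∃ (k : ℕ) (σ : Fin (n + 1) → Fin (k + 1)) (y : X.obj k),
    Function.Surjective σ ∧ ¬ Function.Bijective σ ∧ x = X.act σ y

/-- A symmetric subset (subfunctor) of `X`. -/
structure SymSubset (X : SymSet) where
  carrier : ∀ n : ℕ, Set (X.obj n)
  act_mem : ∀ {m n : ℕ} (α : Fin (m + 1) → Fin (n + 1)) {x : X.obj n},
    x ∈ carrier n → X.act α x ∈ carrier m

/-- `X` is `n`-skeletal: the smallest symmetric subset of `X` containing all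
of its `n`-simplices is all of `X`. -/
def IsSkeletal (X : SymSet) (n : ℕ) : Prop :=
  ∀ Y : SymSubset X, (∀ x : X.obj n, x ∈ Y.carrier n) →
    ∀ (m : ℕ) (x : X.obj m), x ∈ Y.carrier m

/-- `X` has dimension `n`: it is `n`-skeletal but not `k`-skeletal for `k < n`
(for `n ≥ 1` this is equivalent to not being `(n-1)`-skeletal). -/
def HasDim (X : SymSet) (n : ℕ) : Prop :=
  X.IsSkeletal n ∧ ∀ k : ℕ, k < n → ¬ X.IsSkeletal k

/-- Two objects are related if there is an edge between them (in either direction). -/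
def EdgeRel (X : SymSet) (a b : X.obj 0) : Prop :=
  ∃ f : X.obj 1, (X.edgeDom f = a ∧ X.edgeCod f = b) ∨ (X.edgeDom f = b ∧ X.edgeCod f = a)

/-- `X` is connected: it is nonempty and any two objects are joined by a
zig-zag of edges. -/
def Connected (X : SymSet) : Prop :=
  Nonempty (X.obj 0) ∧ ∀ a b : X.obj 0, Relation.ReflTransGen X.EdgeRel a b

/-- `n_a`: the number of nonidentity edges with domain `a`. -/
noncomputable def nEdges (X : SymSet) (a : X.obj 0) : ℕ :=
  Nat.card { f : X.obj 1 // X.edgeDom f = a ∧ ¬ X.IsIdentityEdge f }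

/-- `p(X)`: the maximum of the `n_a` over all objects `a`. -/
noncomputable def pVal (X : SymSet) : ℕ := ⨆ a : X.obj 0, X.nEdges a

/-- A map of symmetric sets (a natural transformation). -/
structure SymMap (X Y : SymSet) where
  app : ∀ n : ℕ, X.obj n → Y.obj n
  naturality : ∀ {m n : ℕ} (α : Fin (m + 1) → Fin (n + 1)) (x : X.obj n),
    app m (X.act α x) = Y.act α (app n x)

/-- A map of symmetric sets is an isomorphism iff it is levelwise bijective. -/
def SymMap.IsIso {X Y : SymSet} (F : SymMap X Y) : Prop :=
  ∀ n : ℕ, Function.Bijective (F.app n)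

/-- `X` and `Y` are isomorphic symmetric sets. -/
def Isomorphic (X Y : SymSet) : Prop := ∃ F : SymMap X Y, F.IsIso

/-- The Bousfield–Segal map `𝓑_m : X_m → X_1^m`, `x ↦ (x_{01}, x_{02}, …, x_{0m})`. -/
def bousfield (X : SymSet) {m : ℕ} (x : X.obj m) : Fin m → X.obj 1 :=
  fun i => X.edge 0 i.succ x

/-- `X` is spiny in degrees below `q`: `𝓔_T` is injective for every spine `T`
of `[n]` for each `1 ≤ n ≤ q`. -/
def SpinyBelow (X : SymSet) (q : ℕ) : Prop :=
  ∀ n : ℕ, 1 ≤ n → n ≤ q → ∀ T : SimpleGraph (Fin (n + 1)), T.IsTree →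
    Function.Injective (X.spineMap T)

/-- `X` is a groupoid: `𝓔_T : X_n → lim_T X` is a bijection for every `n ≥ 1`
and every spine `T` of `[n]`. -/
def IsGroupoid (X : SymSet) : Prop :=
  ∀ n : ℕ, 1 ≤ n → ∀ T : SimpleGraph (Fin (n + 1)), T.IsTree →
    Function.Bijective (X.spineMap T)

/-- `X` is reduced: `X_0` is a singleton. -/
def Reduced (X : SymSet) : Prop := Nonempty (X.obj 0) ∧ Subsingleton (X.obj 0)

/-- A partial group is a reduced spiny symmetric set. -/
def IsPartialGroup (X : SymSet) : Prop := X.Reduced ∧ X.Spiny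

/-- The levelwise product of two symmetric sets. -/
def prod (X Y : SymSet) : SymSet where
  obj n := X.obj n × Y.obj n
  act α p := (X.act α p.1, Y.act α p.2)
  act_id p := by cases p with | mk a b => simp only [X.act_id, Y.act_id]
  act_comp α β p := by cases p with | mk a b => simp only [X.act_comp, Y.act_comp]

end SymSet

namespace SymSet

lemma edge_act (X : SymSet) {m n : ℕ} (α : Fin (m + 1) → Fin (n + 1)) (i j : Fin (m + 1))
    (x : X.obj n) : X.edge i j (X.act α x) = X.edge (α i) (α j) x := by
  unfold edge
  rw [X.act_comp]
  congr 1
  funext t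
  by_cases ht : t = 0 <;> simp [ht, Function.comp]

lemma edge_self (X : SymSet) {m : ℕ} (i : Fin (m + 1)) (x : X.obj m) :
    X.edge i i x = X.identityEdge (X.act (fun _ : Fin 1 => i) x) := by
  unfold edge identityEdge
  rw [X.act_comp]
  congr 1
  funext t
  simp [Function.comp]

/-- The star graph on `Fin (m+1)` with center `0`. -/
def starG (m : ℕ) : SimpleGraph (Fin (m + 1)) where
  Adj i j := i ≠ j ∧ (i = 0 ∨ j = 0)
  symm := ⟨fun i j h => ⟨h.1.symm, h.2.symm⟩⟩
  loopless := ⟨fun i h => h.1 rfl⟩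

lemma starG_isTree (m : ℕ) : (starG m).IsTree := by
  constructor
  · constructor
    · intro b c
      have key : ∀ v : Fin (m + 1), (starG m).Reachable 0 v := by
        intro v
        by_cases hv : v = 0
        · subst hv; exact SimpleGraph.Reachable.refl 0
        · exact SimpleGraph.Adj.reachable ⟨Ne.symm hv, Or.inl rfl⟩
      exact (key b).symm.trans (key c)
  · rw [SimpleGraph.isAcyclic_iff_forall_adj_isBridge]
    have claim : ∀ u : Fin (m + 1), u ≠ 0 →
        ¬ ((starG m) \ SimpleGraph.fromEdgeSet {s(0, u)}).Reachable u 0 := by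
      intro u hu ⟨p⟩
      cases p with
      | nil => exact hu rfl
      | cons h q =>
        rename_i y
        rcases h with ⟨⟨hne, h0⟩, hdel⟩
        have hy : y = 0 := h0.resolve_left hu
        subst hy
        exact hdel (by simp [Sym2.eq_swap, hu])
    intro v w hvw
    rw [SimpleGraph.isBridge_iff]
    rcases hvw.2 with hv | hw
    · subst hv
      intro hr
      exact claim w (Ne.symm hvw.1) hr.symm
    · subst hw
      intro hr
      rw [show s(v, (0 : Fin (m+1))) = s((0 : Fin (m+1)), v) from Sym2.eq_swap] at hr
      exact claim v hvw.1 hr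

lemma bous_inj (X : SymSet) (hgrp : X.IsGroupoid) {m : ℕ} (hm : 1 ≤ m) :
    Function.Injective fun x : X.obj m => X.bousfield x := by
  intro x x' hxx'
  apply (hgrp m hm (starG m) (starG_isTree m)).1
  apply Subtype.ext
  funext i j hlt h
  obtain ⟨hne, h0⟩ := h
  have hj : j ≠ 0 := by
    rintro rfl
    have h' : i.val < (0 : Fin (m+1)).val := hlt
    simp at h'
  have hi : i = 0 := h0.resolve_right hj
  subst hi
  have hjv : 0 < j.val := by
    rcases Nat.eq_zero_or_pos j.val with h' | h'
    · exact absurd (Fin.ext h' : j = 0) hj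
    · exact h'
  have hjlt := j.isLt
  have hsucc : (⟨j.val - 1, by omega⟩ : Fin m).succ = j := Fin.ext (by simp; omega)
  have h2 := congrFun hxx' ⟨j.val - 1, by omega⟩
  show X.edge 0 j x = X.edge 0 j x'
  rw [← hsucc]
  exact h2

lemma bous_surj (X : SymSet) (hred : X.Reduced) (hgrp : X.IsGroupoid) {m : ℕ} (hm : 1 ≤ m) :
    Function.Surjective fun x : X.obj m => X.bousfield x := by
  intro f
  have a : X.obj 0 := hred.1.some
  haveI := hred.2
  have hlim : X.IsSpineLim (starG m)
      (fun i j hlt _ => f ⟨j.val - 1, by have := j.isLt; have h2 : i.val < j.val := hlt; omega⟩) :=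
    ⟨fun _ => a, fun i j hlt h => ⟨Subsingleton.elim _ _, Subsingleton.elim _ _⟩⟩
  obtain ⟨x, hx⟩ := (hgrp m hm (starG m) (starG_isTree m)).2 ⟨_, hlim⟩
  refine ⟨x, ?_⟩
  funext i
  have h1 : (starG m).Adj 0 i.succ := ⟨(Fin.succ_ne_zero i).symm, Or.inl rfl⟩
  have hlt : (0 : Fin (m + 1)) < i.succ := i.succ_pos
  have h2 := congrFun (congrFun (congrFun (congrFun (congrArg Subtype.val hx) 0) i.succ) hlt) h1
  have h3 : X.bousfield x i
      = f ⟨i.succ.val - 1, by have := i.succ.isLt; have h4 : (0:Fin (m+1)).val < i.succ.val := hlt; omega⟩ := h2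
  show X.bousfield x i = f i
  rw [h3]
  congr 1

end SymSet

/-- a group with `n + 1` elements (a reduced symmetric set with all
`𝓔_T` bijective), regarded as a symmetric set, has dimension `n`. -/
theorem stmt11 (X : SymSet) (hred : X.Reduced) (hgrp : X.IsGroupoid) (n : ℕ)
    (hcard : Nat.card (X.obj 1) = n + 1) : X.HasDim n := by
  have a : X.obj 0 := hred.1.some
  haveI hsub := hred.2
  haveI hfin : Finite (X.obj 1) := Nat.finite_of_card_ne_zero (by omega)
  constructor
  · -- IsSkeletal n
    intro Y hY m
    induction m using Nat.strong_induction_on with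
    | _ m IH =>
      intro x
      rcases le_or_gt m n with hmn | hmn
      · rcases Nat.eq_zero_or_pos m with rfl | hm1
        · -- m = 0
          rcases Nat.eq_zero_or_pos n with rfl | hn1
          · exact hY x
          · have hne : Nonempty (X.obj 1) := (Nat.card_ne_zero.mp (by omega)).1
            obtain ⟨g⟩ := hne
            obtain ⟨z, -⟩ := X.bous_surj hred hgrp hn1 (fun _ => g)
            have hz := Y.act_mem (fun _ : Fin 1 => (0 : Fin (n + 1))) (hY z)
            rwa [Subsingleton.elim x (X.act (fun _ : Fin 1 => (0 : Fin (n + 1))) z)]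
        · -- 1 ≤ m ≤ n
          have hn1 : 1 ≤ n := le_trans hm1 hmn
          obtain ⟨z, hz⟩ := X.bous_surj hred hgrp hn1
            (fun i : Fin n => if h : i.val < m then X.bousfield x ⟨i.val, h⟩ else X.identityEdge a)
          have hmn' : m + 1 ≤ n + 1 := by omega
          have hx : x = X.act (Fin.castLE hmn') z := by
            apply X.bous_inj hgrp hm1
            funext i
            have hlt : i.val < n := lt_of_lt_of_le i.isLt hmn
            have e1 : X.bousfield (X.act (Fin.castLE hmn') z) i
                = X.edge (Fin.castLE hmn' 0) (Fin.castLE hmn' i.succ) z := X.edge_act _ _ _ z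
            have e2 : Fin.castLE hmn' i.succ = (⟨i.val, hlt⟩ : Fin n).succ := Fin.ext (by simp)
            have e0 : Fin.castLE hmn' (0 : Fin (m + 1)) = 0 := Fin.ext rfl
            have e3 : X.bousfield x ⟨i.val, i.isLt⟩ = X.bousfield z ⟨i.val, hlt⟩ := by
              have h5 := congrFun hz ⟨i.val, hlt⟩
              rw [dif_pos i.isLt] at h5
              exact h5.symm
            show X.bousfield x i = X.bousfield (X.act (Fin.castLE hmn') z) i
            calc X.bousfield x i = X.bousfield x ⟨i.val, i.isLt⟩ := rfl
              _ = X.bousfield z ⟨i.val, hlt⟩ := e3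
              _ = X.edge 0 ((⟨i.val, hlt⟩ : Fin n).succ) z := rfl
              _ = X.edge (Fin.castLE hmn' 0) (Fin.castLE hmn' i.succ) z := by rw [e0, e2]
              _ = X.bousfield (X.act (Fin.castLE hmn') z) i := e1.symm
          rw [hx]
          exact Y.act_mem _ (hY z)
      · -- m > n
        obtain ⟨m', rfl⟩ : ∃ m', m = m' + 1 := ⟨m - 1, by omega⟩
        have hninj : ¬ Function.Injective (fun i : Fin (m' + 2) => X.edge 0 i x) := by
          intro hinj
          have h1 := Nat.card_le_card_of_injective _ hinj
          rw [hcard, Nat.card_eq_fintype_card, Fintype.card_fin] at h1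
          omega
        obtain ⟨i, j, hVij, hij⟩ := Function.not_injective_iff.mp hninj
        obtain ⟨p, q, hpq, hVpq⟩ :
            ∃ p q : Fin (m' + 2), p < q ∧ X.edge 0 p x = X.edge 0 q x := by
          rcases lt_or_gt_of_ne hij with h | h
          · exact ⟨i, j, h, hVij⟩
          · exact ⟨j, i, h, hVij.symm⟩
        have hq1 : 1 ≤ q.val := by
          have h' : p.val < q.val := hpq
          omega
        have hqlt := q.isLt
        set τ : Fin (m' + 2) → Fin (m' + 2) := fun k => if k = q then p else k with hτ
        have hx : x = X.act τ x := by
          apply X.bous_inj hgrp (by omega)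
          funext l
          show X.edge 0 l.succ x = X.edge 0 l.succ (X.act τ x)
          rw [X.edge_act]
          have ht0 : τ 0 = 0 := by
            simp only [hτ]
            rw [if_neg]
            intro h0
            rw [← h0] at hq1
            simp at hq1
          rw [ht0]
          by_cases hl : l.succ = q
          · have : τ l.succ = p := by simp [hτ, hl]
            rw [this, hl]
            exact hVpq.symm
          · have : τ l.succ = l.succ := by simp [hτ, hl]
            rw [this]
        set δ : Fin (m' + 1) → Fin (m' + 2) :=
          fun t => if t.val < q.val then ⟨t.val, by omega⟩ else ⟨t.val + 1, by have := t.isLt; omega⟩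
          with hδ
        set σ : Fin (m' + 2) → Fin (m' + 1) :=
          fun k => if h : (τ k).val < q.val then ⟨(τ k).val, by omega⟩
            else ⟨(τ k).val - 1, by have := (τ k).isLt; omega⟩ with hσ
        have hτq : ∀ k, (τ k).val ≠ q.val := by
          intro k
          simp only [hτ]
          split
          · have h' : p.val < q.val := hpq
            omega
          · rename_i hk
            intro hv
            exact hk (Fin.ext hv)
        have hfac : δ ∘ σ = τ := by
          funext k
          have h1 := hτq k
          have h2 := (τ k).isLt
          show δ (σ k) = τ k
          simp only [hσ, hδ]
          split_ifs with h h'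
          · exact Fin.ext rfl
          · exact absurd (show (τ k).val - 1 < q.val from h') (by omega)
          · exact Fin.ext (show (τ k).val - 1 + 1 = (τ k).val by omega)
        have hxy : x = X.act σ (X.act δ x) := by
          rw [X.act_comp, hfac]
          exact hx
        rw [hxy]
        exact Y.act_mem σ (IH m' (by omega) (X.act δ x))
  · -- not k-skeletal for k < n
    intro k hk hsk
    have hn1 : 1 ≤ n := by omega
    set Y : SymSet.SymSubset X :=
      { carrier := fun m => {w | ∃ l, l ≤ k ∧ ∃ (α : Fin (m + 1) → Fin (l + 1)) (y : X.obj l),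
          w = X.act α y}
        act_mem := by
          rintro m m2 β w ⟨l, hl, α, y, rfl⟩
          exact ⟨l, hl, α ∘ β, y, X.act_comp β α y⟩ } with hYdef
    have hmem : ∀ w : X.obj k, w ∈ Y.carrier k :=
      fun w => ⟨k, le_refl k, id, w, (X.act_id w).symm⟩
    let φ₀ : X.obj 1 ≃ Fin (n + 1) := Finite.equivFinOfCardEq hcard
    set c : Fin (n + 1) := φ₀ (X.identityEdge a) with hc
    set φ : Fin (n + 1) → X.obj 1 := fun i => φ₀.symm (Equiv.swap 0 c i) with hφ
    have hφinj : Function.Injective φ :=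
      φ₀.symm.injective.comp (Equiv.swap 0 c).injective
    have hφ0 : φ 0 = X.identityEdge a := by
      simp [hφ, hc]
    obtain ⟨z, hz⟩ := X.bous_surj hred hgrp hn1 (fun i : Fin n => φ i.succ)
    have hVz : ∀ i : Fin (n + 1), X.edge 0 i z = φ i := by
      intro i
      induction i using Fin.cases with
      | zero =>
        rw [hφ0, X.edge_self]
        exact congrArg _ (Subsingleton.elim _ _)
      | succ i => exact congrFun hz i
    obtain ⟨l, hl, α, y, hzy⟩ := hsk Y hmem n z
    have hαni : ¬ Function.Injective α := by
      intro hinj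
      have h1 := Fintype.card_le_of_injective α hinj
      simp only [Fintype.card_fin] at h1
      omega
    obtain ⟨i, j, hαij, hij⟩ := Function.not_injective_iff.mp hαni
    apply hij
    apply hφinj
    rw [← hVz i, ← hVz j, hzy, X.edge_act, X.edge_act, hαij]
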